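/- Let K be a field, K_0 ⊆ ... ⊆ K_n finite subfields of K with |K_i| = d_i ≥ 2 and d_0 ≤ ... ≤ d_n, let X = [K_0 × ... × K_n] ⊆ P^n(K), and let P = (a_0 : ... : a_n) ∈ X with j the least index such that a_j ≠ 0. If g is a homogeneous polynomial of degree d with 1 ≤ d ≤ Σ_{i ≠ j}(d_i - 1) that vanishes at every point of X \ {P}, then g(P) = 0. -/

import Mathlib

open Finset MvPolynomial
open scoped LinearAlgebra.Projectivization

namespace Stmt15Aux

variable {K : Type*} [Field K] [DecidableEq K]

lemma basis_coeff (S : Finset K) {c : K} (hc : c ∈ S) :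
    (Lagrange.basis S id c).coeff (S.card - 1) = (∏ c' ∈ S.erase c, (c - c'))⁻¹ := by
  have hvs : Set.InjOn id (S : Set K) := Function.injective_id.injOn
  have hnd := Lagrange.natDegree_basis hvs hc
  rw [← hnd, Polynomial.coeff_natDegree]
  unfold Lagrange.basis
  rw [Polynomial.leadingCoeff_prod, ← Finset.prod_inv_distrib]
  refine Finset.prod_congr rfl fun c' hc' => ?_
  have hne : c ≠ c' := fun h => (Finset.mem_erase.mp hc').1 h.symm
  have hl1 : (Polynomial.X - Polynomial.C (id c')).leadingCoeff = 1 :=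
    (Polynomial.monic_X_sub_C (id c')).leadingCoeff
  rw [Lagrange.basisDivisor, Polynomial.leadingCoeff_mul, Polynomial.leadingCoeff_C, hl1, mul_one]
  rfl

lemma lagrange_sum (S : Finset K) (k : ℕ) (hk : k < S.card) :
    ∑ c ∈ S, (∏ c' ∈ S.erase c, (c - c'))⁻¹ * c ^ k =
      if k = S.card - 1 then 1 else 0 := by
  have hvs : Set.InjOn id (S : Set K) := Function.injective_id.injOn
  have hdeg : ((Polynomial.X : Polynomial K) ^ k).degree < S.card := by
    rw [Polynomial.degree_X_pow]; exact_mod_cast hk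
  have hfe := Lagrange.eq_interpolate (f := (Polynomial.X : Polynomial K) ^ k) hvs hdeg
  calc ∑ c ∈ S, (∏ c' ∈ S.erase c, (c - c'))⁻¹ * c ^ k
      = ∑ c ∈ S, ((Polynomial.X : Polynomial K) ^ k).eval (id c) *
          (Lagrange.basis S id c).coeff (S.card - 1) := by
        refine Finset.sum_congr rfl fun c hc => ?_
        rw [basis_coeff S hc, mul_comm]
        simp
    _ = ((Polynomial.X : Polynomial K) ^ k).coeff (S.card - 1) := by
        conv_rhs => rw [hfe]
        rw [Lagrange.interpolate_apply, Polynomial.finset_sum_coeff]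
        refine Finset.sum_congr rfl fun c hc => ?_
        rw [Polynomial.coeff_C_mul]
    _ = if k = S.card - 1 then 1 else 0 := by
        rw [Polynomial.coeff_X_pow]
        simp [eq_comm]

lemma eval_eval_C {σ : Type*} (b : σ → K) (c : K) (P : Polynomial (MvPolynomial σ K)) :
    eval b (P.eval (MvPolynomial.C c)) = Polynomial.eval c (P.map (eval b)) := by
  induction P using Polynomial.induction_on' with
  | add p q hp hq => simp [hp, hq]
  | monomial n a =>
      simp [Polynomial.eval_monomial, Polynomial.map_monomial]

lemma div_aux {σ : Type*} (q : Polynomial (MvPolynomial σ K)) (hq : q.Monic)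
    (hqc : ∀ t, (q.coeff t).totalDegree = 0) (D : ℕ) :
    ∀ (N : ℕ) (H : Polynomial (MvPolynomial σ K)), H.natDegree ≤ N →
      (∀ k, H.coeff k ≠ 0 → (H.coeff k).totalDegree + k ≤ D) →
      ∃ R : Polynomial (MvPolynomial σ K), R.degree < q.degree ∧
        (∀ k, R.coeff k ≠ 0 → (R.coeff k).totalDegree + k ≤ D) ∧
        ∀ x, q.eval x = 0 → R.eval x = H.eval x := by
  intro N
  induction N using Nat.strong_induction_on with
  | _ N ih =>
  intro H hHN hHD
  have hq0 : q ≠ 0 := hq.ne_zero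
  have hqbot : (⊥ : WithBot ℕ) < q.degree := by
    rw [bot_lt_iff_ne_bot, ne_eq, Polynomial.degree_eq_bot]
    exact hq0
  by_cases hlt : H.degree < q.degree
  · exact ⟨H, hlt, hHD, fun x _ => rfl⟩
  · have hH0 : H ≠ 0 := by
      rintro rfl
      rw [Polynomial.degree_zero] at hlt
      exact hlt hqbot
    have hqle : q.degree ≤ H.degree := not_lt.mp hlt
    set nH := H.natDegree with hnH
    set nq := q.natDegree with hnq
    have hnqle : nq ≤ nH := Polynomial.natDegree_le_natDegree hqle
    set lc := H.leadingCoeff with hlc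
    have hlc0 : lc ≠ 0 := by rwa [hlc, Polynomial.leadingCoeff_ne_zero]
    set M : Polynomial (MvPolynomial σ K) :=
      Polynomial.C lc * (q * Polynomial.X ^ (nH - nq)) with hM
    have hMdeg : M.degree = H.degree := by
      rw [hM, Polynomial.degree_mul, Polynomial.degree_mul, Polynomial.degree_C hlc0,
        Polynomial.degree_X_pow, Polynomial.degree_eq_natDegree hq0,
        Polynomial.degree_eq_natDegree hH0, zero_add, ← hnq, ← hnH,
        ← Nat.cast_add, Nat.add_sub_cancel' hnqle]
    have hMlead : M.leadingCoeff = lc := by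
      rw [hM, Polynomial.leadingCoeff_mul, Polynomial.leadingCoeff_mul,
        Polynomial.leadingCoeff_C, hq.leadingCoeff, Polynomial.leadingCoeff_X_pow,
        one_mul, mul_one]
    set H' := H - M with hH'
    have hH'deg : H'.degree < H.degree :=
      Polynomial.degree_sub_lt hMdeg.symm hH0 hMlead.symm
    have hMeval : ∀ x, q.eval x = 0 → M.eval x = 0 := by
      intro x hx
      rw [hM, Polynomial.eval_mul, Polynomial.eval_mul, hx, zero_mul, mul_zero]
    have hnHD : nH ≤ D := by
      have := hHD nH (by rw [hnH, Polynomial.coeff_natDegree, ← hlc]; exact hlc0)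
      omega
    have hcM : ∀ k, (M.coeff k).totalDegree ≤ (H.coeff nH).totalDegree := by
      intro k
      have : M = Polynomial.C lc * (q * Polynomial.X ^ (nH - nq)) := hM
      rw [this, Polynomial.coeff_C_mul, Polynomial.coeff_mul_X_pow']
      have hlcH : lc = H.coeff nH := by rw [hlc, hnH]; exact Polynomial.coeff_natDegree.symm
      split
      · refine le_trans (MvPolynomial.totalDegree_mul _ _) ?_
        rw [hqc, add_zero, hlcH]
      · simp
    have hH'D : ∀ k, H'.coeff k ≠ 0 → (H'.coeff k).totalDegree + k ≤ D := by
      intro k hk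
      have hkle : k ≤ nH := by
        have h1 : k ≤ H'.natDegree := Polynomial.le_natDegree_of_ne_zero hk
        have h2 : H'.degree ≤ H.degree := le_of_lt hH'deg
        have h3 : H'.natDegree ≤ nH := Polynomial.natDegree_le_natDegree h2
        omega
      have hA : (H.coeff k).totalDegree + k ≤ D := by
        by_cases h : H.coeff k = 0
        · rw [h, MvPolynomial.totalDegree_zero]; omega
        · exact hHD k h
      have hB : (M.coeff k).totalDegree + k ≤ D := by
        have h1 := hcM k
        have h2 : (H.coeff nH).totalDegree + nH ≤ D :=
          hHD nH (by rw [hnH, Polynomial.coeff_natDegree, ← hlc]; exact hlc0)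
        omega
      have hmax : (H'.coeff k).totalDegree ≤
          max (H.coeff k).totalDegree (M.coeff k).totalDegree := by
        rw [hH', Polynomial.coeff_sub]
        exact MvPolynomial.totalDegree_sub _ _
      rcases le_max_iff.mp hmax with h | h <;> omega
    by_cases hH'0 : H' = 0
    · refine ⟨0, by rwa [Polynomial.degree_zero], by simp, fun x hx => ?_⟩
      have hHM : H = M := by
        have := hH'0
        rw [hH', sub_eq_zero] at this
        exact this
      rw [Polynomial.eval_zero, hHM, hMeval x hx]
    · have hlt2 : H'.natDegree < N :=
        lt_of_lt_of_le (Polynomial.natDegree_lt_natDegree hH'0 hH'deg) hHN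
      obtain ⟨R, hR1, hR2, hR3⟩ := ih H'.natDegree hlt2 H' le_rfl hH'D
      refine ⟨R, hR1, hR2, fun x hx => ?_⟩
      rw [hR3 x hx, hH', Polynomial.eval_sub, hMeval x hx, sub_zero]

lemma grid_lemma : ∀ (m : ℕ) (S : Fin m → Finset K) (a : Fin m → K),
    (∀ i, a i ∈ S i) → ∀ h : MvPolynomial (Fin m) K,
    (∀ b : Fin m → K, (∀ i, b i ∈ S i) → b ≠ a → eval b h = 0) →
    eval a h ≠ 0 → ∑ i, ((S i).card - 1) ≤ h.totalDegree := by
  intro m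
  induction m with
  | zero => intro S a ha h hv hna; simp
  | succ m IH =>
    intro S a ha h hvan hna
    set S0 := S 0 with hS0
    set d0 := S0.card with hd0
    have hd0pos : 0 < d0 := Finset.card_pos.mpr ⟨a 0, ha 0⟩
    set q0 : Polynomial K := ∏ c ∈ S0, (Polynomial.X - Polynomial.C c) with hq0
    set q : Polynomial (MvPolynomial (Fin m) K) := q0.map MvPolynomial.C with hq
    have hq0m : q0.Monic :=
      Polynomial.monic_prod_of_monic _ _ fun c _ => Polynomial.monic_X_sub_C c
    have hqm : q.Monic := hq0m.map _
    have hq0deg : q0.natDegree = d0 := by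
      rw [hq0, Polynomial.natDegree_prod_of_monic _ _ fun c _ => Polynomial.monic_X_sub_C c]
      simp [Polynomial.natDegree_X_sub_C, hd0]
    have hqdeg : q.natDegree = d0 := by
      rw [hq, hq0m.natDegree_map, hq0deg]
    have hqc : ∀ t, (q.coeff t).totalDegree = 0 := fun t => by
      rw [hq, Polynomial.coeff_map]; exact MvPolynomial.totalDegree_C _
    have hqroot : ∀ c ∈ S0, q.eval (MvPolynomial.C c) = 0 := by
      intro c hc
      rw [hq, Polynomial.eval_map, Polynomial.eval₂_at_apply]
      have : q0.eval c = 0 := by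
        rw [hq0, Polynomial.eval_prod]
        exact Finset.prod_eq_zero hc (by simp)
      rw [this, map_zero]
    set H := finSuccEquiv K m h with hH
    obtain ⟨R, hRdeg, hRD, hRroot⟩ := div_aux q hqm hqc h.totalDegree H.natDegree H le_rfl
      (fun k hk => MvPolynomial.totalDegree_coeff_finSuccEquiv_add_le h k hk)
    have hRnd : R.natDegree < d0 := by
      rcases eq_or_ne R 0 with rfl | h0
      · simpa using hd0pos
      · have := Polynomial.natDegree_lt_natDegree h0 hRdeg
        rwa [hqdeg] at this
    have factA : ∀ c ∈ S0, ∀ b' : Fin m → K,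
        eval b' (R.eval (MvPolynomial.C c)) = eval (Fin.cons c b') h := by
      intro c hc b'
      rw [eval_eq_eval_mv_eval', hRroot _ (hqroot c hc), eval_eval_C]
    set u : K → K := fun c => (∏ c' ∈ S0.erase c, (c - c'))⁻¹ with hu
    set w : MvPolynomial (Fin m) K :=
      ∑ c ∈ S0, MvPolynomial.C (u c) * R.eval (MvPolynomial.C c) with hw
    have factB : ∀ b' : Fin m → K,
        eval b' w = ∑ c ∈ S0, u c * eval (Fin.cons c b') h := by
      intro b'
      rw [hw, map_sum]
      refine Finset.sum_congr rfl fun c hc => ?_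
      rw [map_mul, eval_C, factA c hc b']
    have factC : w = R.coeff (d0 - 1) := by
      have hRev : ∀ x : MvPolynomial (Fin m) K,
          R.eval x = ∑ k ∈ Finset.range d0, R.coeff k * x ^ k :=
        fun x => Polynomial.eval_eq_sum_range' hRnd x
      rw [hw]
      calc ∑ c ∈ S0, MvPolynomial.C (u c) * R.eval (MvPolynomial.C c)
          = ∑ c ∈ S0, ∑ k ∈ Finset.range d0,
              R.coeff k * MvPolynomial.C (u c * c ^ k) := by
            refine Finset.sum_congr rfl fun c hc => ?_
            rw [hRev, Finset.mul_sum]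
            refine Finset.sum_congr rfl fun k hk => ?_
            rw [map_mul, map_pow]
            ring
        _ = ∑ k ∈ Finset.range d0,
              R.coeff k * MvPolynomial.C (∑ c ∈ S0, u c * c ^ k) := by
            rw [Finset.sum_comm]
            refine Finset.sum_congr rfl fun k hk => ?_
            rw [map_sum, Finset.mul_sum]
        _ = ∑ k ∈ Finset.range d0,
              R.coeff k * MvPolynomial.C (if k = d0 - 1 then 1 else 0) := by
            refine Finset.sum_congr rfl fun k hk => ?_
            rw [lagrange_sum S0 k (Finset.mem_range.mp hk)]
        _ = R.coeff (d0 - 1) := by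
            simp only [apply_ite MvPolynomial.C, map_one, map_zero, mul_ite, mul_one, mul_zero]
            rw [Finset.sum_ite_eq' (Finset.range d0) (d0 - 1) (fun k => R.coeff k)]
            simp [Finset.mem_range]
            omega
    have hwa : eval (Fin.tail a) w = u (a 0) * eval a h := by
      rw [factB]
      rw [Finset.sum_eq_single (a 0)]
      · rw [Fin.cons_self_tail]
      · intro c hc hne
        rw [hvan (Fin.cons c (Fin.tail a)) ?_ ?_, mul_zero]
        · intro i
          refine Fin.cases ?_ ?_ i
          · simpa using hc
          · intro i; simpa [Fin.tail] using ha i.succ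
        · intro heq
          apply hne
          have := congrFun heq 0
          simpa using this
      · intro habs; exact absurd (ha 0) habs
    have hu0 : u (a 0) ≠ 0 := by
      rw [hu]
      apply inv_ne_zero
      refine Finset.prod_ne_zero_iff.mpr fun c' hc' => sub_ne_zero.mpr ?_
      exact fun hcontr => (Finset.mem_erase.mp hc').1 hcontr.symm
    have hwa0 : eval (Fin.tail a) w ≠ 0 := by
      rw [hwa]; exact mul_ne_zero hu0 hna
    have hwvan : ∀ b' : Fin m → K, (∀ i, b' i ∈ S i.succ) → b' ≠ Fin.tail a →
        eval b' w = 0 := by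
      intro b' hb' hne
      rw [factB]
      refine Finset.sum_eq_zero fun c hc => ?_
      rw [hvan (Fin.cons c b') ?_ ?_, mul_zero]
      · intro i
        refine Fin.cases ?_ ?_ i
        · simpa using hc
        · intro i; simpa using hb' i
      · intro heq
        apply hne
        funext i
        have := congrFun heq i.succ
        simpa [Fin.tail] using this
    have hIH := IH (fun i => S i.succ) (Fin.tail a) (fun i => ha i.succ) w hwvan hwa0
    have hw0 : w ≠ 0 := fun h0 => hwa0 (by rw [h0, map_zero])
    have hcoeffne : R.coeff (d0 - 1) ≠ 0 := factC ▸ hw0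
    have hbound := hRD (d0 - 1) hcoeffne
    rw [← factC] at hbound
    have hIH' : ∑ i : Fin m, ((S i.succ).card - 1) ≤ w.totalDegree := hIH
    have e1 : (S 0).card = d0 := rfl
    rw [Fin.sum_univ_succ]
    omega

end Stmt15Aux

theorem stmt_15 (K : Type*) [Field K] (n : ℕ)
    (A : Fin (n + 1) → Subfield K)
    (hnested : ∀ i j : Fin (n + 1), i ≤ j → A i ≤ A j)
    (hfin : ∀ i, (A i : Set K).Finite)
    (d : Fin (n + 1) → ℕ) (hd : ∀ i, Nat.card (A i) = d i)
    (hd2 : ∀ i, 2 ≤ d i)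
    (a : Fin (n + 1) → K) (hane : a ≠ 0) (haA : ∀ i, a i ∈ A i)
    (j : Fin (n + 1)) (hj : a j ≠ 0) (hjleast : ∀ i : Fin (n + 1), i < j → a i = 0)
    (g : MvPolynomial (Fin (n + 1)) K) (dd : ℕ) (hg : g.IsHomogeneous dd)
    (hdd1 : 1 ≤ dd) (hdd2 : dd ≤ ∑ i ∈ Finset.univ.erase j, (d i - 1))
    (hvanish : ∀ (b : Fin (n + 1) → K) (hb : b ≠ 0), (∀ i, b i ∈ A i) →
      Projectivization.mk K b hb ≠ Projectivization.mk K a hane → eval b g = 0) :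
    eval a g = 0 := by
  by_contra hga
  classical
  set S : Fin (n + 1) → Finset K := fun i => (hfin i).toFinset with hS
  have hScard : ∀ i, (S i).card = d i := by
    intro i
    have h1 : Nat.card ((A i : Set K)) = ((hfin i).toFinset).card := by
      rw [Nat.card_coe_set_eq, Set.ncard_eq_toFinset_card _ (hfin i)]
    rw [hS, ← h1, ← hd i]
    rfl
  set T : Finset K := ((hfin j).toFinset.erase 0).erase 1 with hT
  have hTmem : ∀ x, x ∈ T ↔ x ∈ A j ∧ x ≠ 0 ∧ x ≠ 1 := by
    intro x
    simp only [hT, Finset.mem_erase, Set.Finite.mem_toFinset, SetLike.mem_coe]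
    tauto
  have hTcard : T.card = d j - 2 := by
    have h0 : (0 : K) ∈ (hfin j).toFinset := by
      rw [Set.Finite.mem_toFinset]; exact (A j).zero_mem
    have h1 : (1 : K) ∈ (hfin j).toFinset.erase 0 := by
      rw [Finset.mem_erase, Set.Finite.mem_toFinset]
      exact ⟨one_ne_zero, (A j).one_mem⟩
    have hcard : (hfin j).toFinset.card = d j := hScard j
    rw [hT, Finset.card_erase_of_mem h1, Finset.card_erase_of_mem h0, hcard]
    omega
  have hgne : g ≠ 0 := fun h0 => hga (by simp [h0])
  have hgdeg : g.totalDegree = dd := hg.totalDegree hgne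
  set P : MvPolynomial (Fin (n + 1)) K := ∏ lam ∈ T, (X j - C (lam * a j)) with hP
  have hPdeg : P.totalDegree ≤ T.card := by
    refine le_trans (MvPolynomial.totalDegree_finset_prod _ _) ?_
    rw [Finset.card_eq_sum_ones]
    refine Finset.sum_le_sum fun lam _ => ?_
    refine le_trans (MvPolynomial.totalDegree_sub _ _) (max_le ?_ ?_)
    · exact le_of_eq (MvPolynomial.totalDegree_X _)
    · rw [MvPolynomial.totalDegree_C]
      exact Nat.zero_le _
  have hhdeg : (g * P).totalDegree ≤ dd + (d j - 2) := by
    refine le_trans (MvPolynomial.totalDegree_mul _ _) ?_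
    rw [hgdeg]
    have := hPdeg
    omega
  have hha : eval a (g * P) ≠ 0 := by
    rw [map_mul]
    refine mul_ne_zero hga ?_
    rw [hP, map_prod]
    refine Finset.prod_ne_zero_iff.mpr fun lam hl => ?_
    simp only [map_sub, eval_X, eval_C]
    obtain ⟨-, h0, h1⟩ := (hTmem lam).mp hl
    have hfac : a j - lam * a j = (1 - lam) * a j := by ring
    rw [hfac]
    exact mul_ne_zero (sub_ne_zero.mpr (Ne.symm h1)) hj
  have hhvan : ∀ b : Fin (n + 1) → K, (∀ i, b i ∈ S i) → b ≠ a → eval b (g * P) = 0 := by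
    intro b hb hba
    have hbA : ∀ i, b i ∈ A i := fun i => by
      have := hb i
      rwa [hS, Set.Finite.mem_toFinset] at this
    rcases eq_or_ne b 0 with rfl | hb0
    · rw [map_mul]
      have hc0 : constantCoeff g = 0 := by
        rw [constantCoeff_eq]
        exact hg.coeff_eq_zero (by rw [map_zero]; omega)
      rw [eval_zero, hc0, zero_mul]
    · by_cases hmk : Projectivization.mk K b hb0 = Projectivization.mk K a hane
      · obtain ⟨μ, hμ⟩ := (Projectivization.mk_eq_mk_iff K b a hb0 hane).mp hmk
        have hbi : ∀ i, b i = (μ : K) * a i := fun i => by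
          rw [← hμ]; simp [Units.smul_def]
        have hμ0 : (μ : K) ≠ 0 := μ.ne_zero
        have hμA : (μ : K) ∈ A j := by
          have hform : (μ : K) = b j * (a j)⁻¹ := by
            rw [hbi j]
            field_simp
          rw [hform]
          exact (A j).mul_mem (hbA j) ((A j).inv_mem (haA j))
        have hμ1 : (μ : K) ≠ 1 := by
          intro h1
          apply hba
          funext i
          rw [hbi i, h1, one_mul]
        rw [map_mul, hP, map_prod]
        have hzero : eval b (X j - C ((μ : K) * a j)) = 0 := by
          simp [hbi j]
        rw [Finset.prod_eq_zero ((hTmem _).mpr ⟨hμA, hμ0, hμ1⟩) hzero, mul_zero]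
      · rw [map_mul, hvanish b hb0 hbA hmk, zero_mul]
  have hmain := Stmt15Aux.grid_lemma (n + 1) S a
    (fun i => by rw [hS, Set.Finite.mem_toFinset]; exact haA i) (g * P) hhvan hha
  have hsum : ∑ i, ((S i).card - 1) = (d j - 1) + ∑ i ∈ Finset.univ.erase j, (d i - 1) := by
    simp_rw [hScard]
    rw [← Finset.add_sum_erase _ _ (Finset.mem_univ j)]
  have hdj := hd2 j
  omega
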